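/- Let k be a field of characteristic p, q = p^r, and D^(q) = ⊕_{q | n} D_n the subalgebra of the divided power algebra D spanned by the x^[qn]. Then the k-linear map D^(q) → D sending x^[qn] to x^[n] is an isomorphism of k-algebras. -/

import Mathlib

lemma lucas_pow_mul (p : ℕ) (hp : p.Prime) (r a b : ℕ) :
    (p ^ r * a).choose (p ^ r * b) ≡ a.choose b [MOD p] := by
  haveI : Fact p.Prime := ⟨hp⟩
  induction r with
  | zero => simp [Nat.ModEq.refl]
  | succ r ih =>
    have h := Choose.choose_modEq_choose_mod_mul_choose_div_nat
      (n := p ^ (r+1) * a) (k := p ^ (r+1) * b) (p := p)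
    have hp0 : 0 < p := hp.pos
    have e1 : p ^ (r+1) * a % p = 0 := by
      rw [pow_succ, mul_right_comm]; exact Nat.mul_mod_left _ _
    have e2 : p ^ (r+1) * b % p = 0 := by
      rw [pow_succ, mul_right_comm]; exact Nat.mul_mod_left _ _
    have e3 : p ^ (r+1) * a / p = p ^ r * a := by
      rw [pow_succ, mul_right_comm, Nat.mul_div_cancel _ hp0]
    have e4 : p ^ (r+1) * b / p = p ^ r * b := by
      rw [pow_succ, mul_right_comm, Nat.mul_div_cancel _ hp0]
    rw [e1, e2, e3, e4, Nat.choose_self, one_mul] at h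
    exact h.trans ih

/-- Let `k` be a field of characteristic `p`, `q = p^r`, and `D^(q)` the subalgebra of the
divided power algebra `D` spanned by the `x^[qn]`. Then the `k`-linear map `D^(q) → D`
sending `x^[qn]` to `x^[n]` is an isomorphism of `k`-algebras. -/
theorem stmt9 (p : ℕ) (hp : p.Prime) (k D : Type*) [Field k] [CharP k p]
    [CommRing D] [Algebra k D]
    (B : Module.Basis ℕ k D) (hone : B 0 = 1)
    (hmul : ∀ n m : ℕ, B n * B m = ((n + m).choose n : k) • B (n + m))
    (r : ℕ) (q : ℕ) (hq : q = p ^ r)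
    (S : Subalgebra k D)
    (hS : (S : Set D) = Submodule.span k (Set.range fun n : ℕ => B (q * n))) :
    ∃ ψ : S ≃ₐ[k] D, ∀ (n : ℕ) (h : B (q * n) ∈ S), ψ ⟨B (q * n), h⟩ = B n := by
  have hq0 : q ≠ 0 := by rw [hq]; exact pow_ne_zero _ hp.pos.ne'
  -- linear independence of the family
  have hinj : Function.Injective fun n : ℕ => q * n := fun a b h => by
    exact Nat.eq_of_mul_eq_mul_left (Nat.pos_of_ne_zero hq0) h
  have hli : LinearIndependent k (fun n : ℕ => B (q * n)) :=
    B.linearIndependent.comp _ hinj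
  -- S as a submodule equals the span
  have hSpan : Subalgebra.toSubmodule S
      = Submodule.span k (Set.range fun n : ℕ => B (q * n)) := by
    ext x
    constructor
    · intro hx
      have : x ∈ (S : Set D) := hx
      rw [hS] at this; exact this
    · intro hx
      have : x ∈ (S : Set D) := by rw [hS]; exact hx
      exact this
  -- basis of S
  let C0 : Module.Basis ℕ k (Submodule.span k (Set.range fun n : ℕ => B (q * n))) :=
    Module.Basis.span hli
  let eS : (Submodule.span k (Set.range fun n : ℕ => B (q * n))) ≃ₗ[k]
      Subalgebra.toSubmodule S := LinearEquiv.ofEq _ _ hSpan.symm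
  let C : Module.Basis ℕ k S := C0.map eS
  have hmem : ∀ n : ℕ, B (q * n) ∈ S := by
    intro n
    have : B (q * n) ∈ (S : Set D) := by
      rw [hS]; exact Submodule.subset_span ⟨n, rfl⟩
    exact this
  have hC : ∀ n : ℕ, (C n : D) = B (q * n) := by
    intro n
    simp only [C, Module.Basis.map_apply]
    exact congrArg Subtype.val (Module.Basis.span_apply hli n)
  -- the linear equivalence
  let φ : S ≃ₗ[k] D := C.equiv B (Equiv.refl ℕ)
  have hφ : ∀ n : ℕ, φ (C n) = B n := fun n => C.equiv_apply n B (Equiv.refl ℕ)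
  -- key congruence of binomial coefficients in k
  have hcast : ∀ n m : ℕ, ((q * (n + m)).choose (q * n) : k) = ((n + m).choose n : k) := by
    intro n m
    have := lucas_pow_mul p hp r (n + m) n
    rw [← hq] at this
    exact (CharP.natCast_eq_natCast k p).mpr this
  -- multiplicativity on basis elements
  have hCmul : ∀ n m : ℕ, C n * C m = (((n + m).choose n : k)) • C (n + m) := by
    intro n m
    apply Subtype.ext
    push_cast [hC]
    rw [hmul, ← Nat.mul_add, hcast]
  -- φ is multiplicative
  have hmul' : ∀ x y : S, φ (x * y) = φ x * φ y := by
    have key : (LinearMap.mul k S).compr₂ φ.toLinearMap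
        = (LinearMap.mul k D).compl₁₂ φ.toLinearMap φ.toLinearMap := by
      apply C.ext; intro n
      apply C.ext; intro m
      simp only [LinearMap.compr₂_apply, LinearMap.compl₁₂_apply, LinearMap.mul_apply',
        LinearEquiv.coe_coe]
      rw [hCmul, map_smul, hφ, hφ, hφ, hmul]
    intro x y
    simpa using DFunLike.congr_fun (DFunLike.congr_fun key x) y
  have hone' : φ 1 = 1 := by
    have h1 : (1 : S) = C 0 := by
      apply Subtype.ext
      rw [hC, Nat.mul_zero, hone]; rfl
    rw [h1, hφ 0, hone]
  refine ⟨AlgEquiv.ofLinearEquiv φ hone' hmul', ?_⟩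
  intro n h
  have : (⟨B (q * n), h⟩ : S) = C n := Subtype.ext (hC n).symm
  rw [this]
  exact hφ n
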